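/- Let p₁ > 0 and let D, R, I : ℝ → ℝ be differentiable functions satisfying D' = 2p₁·I·D, R' = 2p₁·I·R, I' = -2p₁(D² + R²) on ℝ. Set ρ := √(D(0)² + R(0)² + I(0)²) and assume (D(0),R(0),I(0)) ≠ (0,0,ρ) and (D(0),R(0),I(0)) ≠ (0,0,-ρ). Then for all τ ∈ ℝ: D(τ) = (ρ·D(0)/√(D(0)²+R(0)²)) / cosh(2p₁ρτ - artanh(I(0)/ρ)), R(τ) = (ρ·R(0)/√(D(0)²+R(0)²)) / cosh(2p₁ρτ - artanh(I(0)/ρ)), and I(τ) = -ρ·tanh(2p₁ρτ - artanh(I(0)/ρ)). -/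

import Mathlib

/-- The real inverse hyperbolic tangent. -/
noncomputable def artanh (x : ℝ) : ℝ := Real.log ((1 + x) / (1 - x)) / 2

private lemma const_of_deriv_zero (f : ℝ → ℝ) (hf : ∀ x, HasDerivAt f 0 x) (x : ℝ) :
    f x = f 0 :=
  is_const_of_deriv_eq_zero (fun y => (hf y).differentiableAt) (fun y => (hf y).deriv) x 0

/-- Case 1 (pure p₁-component) of the quadratic system: explicit solution. -/
theorem stmt_1 (p₁ : ℝ) (hp₁ : 0 < p₁) (D R I : ℝ → ℝ)
    (hD : ∀ τ, HasDerivAt D (2 * p₁ * I τ * D τ) τ)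
    (hR : ∀ τ, HasDerivAt R (2 * p₁ * I τ * R τ) τ)
    (hI : ∀ τ, HasDerivAt I (-(2 * p₁ * (D τ ^ 2 + R τ ^ 2))) τ)
    (ρ : ℝ) (hρ : ρ = Real.sqrt (D 0 ^ 2 + R 0 ^ 2 + I 0 ^ 2))
    (hne₁ : (D 0, R 0, I 0) ≠ (0, 0, ρ))
    (hne₂ : (D 0, R 0, I 0) ≠ (0, 0, -ρ)) :
    ∀ τ : ℝ,
      D τ = ρ * D 0 / Real.sqrt (D 0 ^ 2 + R 0 ^ 2)
              / Real.cosh (2 * p₁ * ρ * τ - artanh (I 0 / ρ)) ∧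
      R τ = ρ * R 0 / Real.sqrt (D 0 ^ 2 + R 0 ^ 2)
              / Real.cosh (2 * p₁ * ρ * τ - artanh (I 0 / ρ)) ∧
      I τ = -ρ * Real.tanh (2 * p₁ * ρ * τ - artanh (I 0 / ρ)) := by
  have contI : Continuous I :=
    Differentiable.continuous (fun τ => (hI τ).differentiableAt)
  set J : ℝ → ℝ := fun τ => ∫ t in (0:ℝ)..τ, I t with hJdef
  have hJ : ∀ τ, HasDerivAt J (I τ) τ := fun τ => (contI.integral_hasStrictDerivAt 0 τ).hasDerivAt
  have hJ0 : J 0 = 0 := intervalIntegral.integral_same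
  -- D and R in terms of E τ = exp (2 p₁ J τ)
  set E : ℝ → ℝ := fun τ => Real.exp (2 * p₁ * J τ) with hEdef
  have hEpos : ∀ τ, 0 < E τ := fun τ => Real.exp_pos _
  have hmulE : ∀ τ, Real.exp (-(2 * p₁) * J τ) * E τ = 1 := by
    intro τ
    simp only [hEdef]
    rw [← Real.exp_add]
    rw [show -(2 * p₁) * J τ + 2 * p₁ * J τ = 0 by ring, Real.exp_zero]
  have hDE : ∀ τ, D τ = D 0 * E τ := by
    have key : ∀ τ, D τ * Real.exp (-(2 * p₁) * J τ) = D 0 * Real.exp (-(2 * p₁) * J 0) := by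
      intro τ
      apply const_of_deriv_zero (fun t => D t * Real.exp (-(2 * p₁) * J t))
      intro x
      have h := (hD x).mul (((hJ x).const_mul (-(2 * p₁))).exp)
      refine h.congr_deriv ?_
      ring
    intro τ
    have h := key τ
    rw [hJ0] at h
    simp only [mul_zero, Real.exp_zero, mul_one] at h
    calc D τ = D τ * (Real.exp (-(2 * p₁) * J τ) * E τ) := by rw [hmulE τ, mul_one]
      _ = (D τ * Real.exp (-(2 * p₁) * J τ)) * E τ := by ring
      _ = D 0 * E τ := by rw [h]
  have hRE : ∀ τ, R τ = R 0 * E τ := by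
    have key : ∀ τ, R τ * Real.exp (-(2 * p₁) * J τ) = R 0 * Real.exp (-(2 * p₁) * J 0) := by
      intro τ
      apply const_of_deriv_zero (fun t => R t * Real.exp (-(2 * p₁) * J t))
      intro x
      have h := (hR x).mul (((hJ x).const_mul (-(2 * p₁))).exp)
      refine h.congr_deriv ?_
      ring
    intro τ
    have h := key τ
    rw [hJ0] at h
    simp only [mul_zero, Real.exp_zero, mul_one] at h
    calc R τ = R τ * (Real.exp (-(2 * p₁) * J τ) * E τ) := by rw [hmulE τ, mul_one]
      _ = (R τ * Real.exp (-(2 * p₁) * J τ)) * E τ := by ring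
      _ = R 0 * E τ := by rw [h]
  -- conservation law
  have hcons : ∀ τ, D τ ^ 2 + R τ ^ 2 + I τ ^ 2 = D 0 ^ 2 + R 0 ^ 2 + I 0 ^ 2 := by
    intro τ
    apply const_of_deriv_zero (fun t => D t ^ 2 + R t ^ 2 + I t ^ 2)
    intro x
    have h := (((hD x).pow 2).add ((hR x).pow 2)).add ((hI x).pow 2)
    refine h.congr_deriv ?_
    ring
  -- basic positivity facts
  have hN0 : D 0 ^ 2 + R 0 ^ 2 + I 0 ^ 2 ≠ 0 := by
    intro h
    have hD0 : D 0 = 0 := by nlinarith [sq_nonneg (D 0), sq_nonneg (R 0), sq_nonneg (I 0)]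
    have hR0 : R 0 = 0 := by nlinarith [sq_nonneg (D 0), sq_nonneg (R 0), sq_nonneg (I 0)]
    have hI0 : I 0 = 0 := by nlinarith [sq_nonneg (D 0), sq_nonneg (R 0), sq_nonneg (I 0)]
    apply hne₁
    rw [hD0, hR0, hI0, hρ, hD0, hR0, hI0]
    norm_num
  have hρsq : ρ ^ 2 = D 0 ^ 2 + R 0 ^ 2 + I 0 ^ 2 := by
    rw [hρ, Real.sq_sqrt (by positivity)]
  have hρpos : 0 < ρ := by
    rw [hρ]
    apply Real.sqrt_pos.mpr
    rcases lt_or_eq_of_le (by positivity : (0:ℝ) ≤ D 0 ^ 2 + R 0 ^ 2 + I 0 ^ 2) with h | h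
    · exact h
    · exact absurd h.symm hN0
  have hS0 : 0 < D 0 ^ 2 + R 0 ^ 2 := by
    rcases lt_or_eq_of_le (by positivity : (0:ℝ) ≤ D 0 ^ 2 + R 0 ^ 2) with h | h
    · exact h
    · exfalso
      have hD0 : D 0 = 0 := by nlinarith [sq_nonneg (D 0), sq_nonneg (R 0)]
      have hR0 : R 0 = 0 := by nlinarith [sq_nonneg (D 0), sq_nonneg (R 0)]
      have : I 0 ^ 2 = ρ ^ 2 := by rw [hρsq, hD0, hR0]; ring
      have : (I 0 - ρ) * (I 0 + ρ) = 0 := by nlinarith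
      rcases mul_eq_zero.mp this with h' | h'
      · exact hne₁ (by rw [hD0, hR0]; simp [show I 0 = ρ by linarith])
      · exact hne₂ (by rw [hD0, hR0]; simp [show I 0 = -ρ by linarith])
  -- bounds on I τ
  have hIbnd : ∀ τ, I τ ^ 2 < ρ ^ 2 := by
    intro τ
    have h := hcons τ
    rw [← hρsq] at h
    have h1 : D τ ^ 2 + R τ ^ 2 = (D 0 ^ 2 + R 0 ^ 2) * E τ ^ 2 := by
      rw [hDE τ, hRE τ]; ring
    nlinarith [hEpos τ, sq_nonneg (E τ), mul_pos hS0 (pow_pos (hEpos τ) 2)]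
  have hIlt : ∀ τ, I τ < ρ := fun τ => by nlinarith [hIbnd τ]
  have hIgt : ∀ τ, -ρ < I τ := fun τ => by nlinarith [hIbnd τ]
  -- the conserved ratio V
  have hV : ∀ τ, (ρ + I τ) / (ρ - I τ) * Real.exp (4 * p₁ * ρ * τ)
      = (ρ + I 0) / (ρ - I 0) := by
    have key : ∀ τ, (ρ + I τ) / (ρ - I τ) * Real.exp (4 * p₁ * ρ * τ)
        = (ρ + I 0) / (ρ - I 0) * Real.exp (4 * p₁ * ρ * 0) := by
      intro τ
      apply const_of_deriv_zero
        (fun t => (ρ + I t) / (ρ - I t) * Real.exp (4 * p₁ * ρ * t))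
      intro x
      have hne : ρ - I x ≠ 0 := sub_ne_zero.mpr (hIlt x).ne'
      have hdiv := ((hI x).const_add ρ).div ((hI x).const_sub ρ) hne
      have hexp : HasDerivAt (fun t => Real.exp (4 * p₁ * ρ * t))
          (Real.exp (4 * p₁ * ρ * x) * (4 * p₁ * ρ)) x := by
        have := ((hasDerivAt_id x).const_mul (4 * p₁ * ρ)).exp
        simpa using this
      have h := hdiv.mul hexp
      refine h.congr_deriv ?_
      have hc := hcons x
      rw [← hρsq] at hc
      have hDR : D x ^ 2 + R x ^ 2 = ρ ^ 2 - I x ^ 2 := by linarith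
      rw [hDR]
      simp only [Pi.div_apply]
      field_simp
      ring
    intro τ
    have h := key τ
    simpa using h
  -- main computation, per τ
  intro τ
  set θ : ℝ := 2 * p₁ * ρ * τ - artanh (I 0 / ρ) with hθdef
  set a : ℝ := Real.exp θ with hadef
  have hapos : 0 < a := Real.exp_pos _
  -- exp (2 * artanh (I 0 / ρ)) = (ρ + I 0)/(ρ - I 0)
  have hd1 : (0:ℝ) < 1 + I 0 / ρ := by
    have : -(1:ℝ) < I 0 / ρ := by rw [lt_div_iff₀ hρpos]; linarith [hIgt 0]
    linarith
  have hd2 : (0:ℝ) < 1 - I 0 / ρ := by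
    have : I 0 / ρ < 1 := (div_lt_one hρpos).mpr (hIlt 0)
    linarith
  have hr1 : ρ + I 0 ≠ 0 := by have := hIgt 0; intro h; linarith
  have hr2 : ρ - I 0 ≠ 0 := sub_ne_zero.mpr (hIlt 0).ne'
  have hexp_artanh : Real.exp (2 * artanh (I 0 / ρ)) = (ρ + I 0) / (ρ - I 0) := by
    unfold artanh
    rw [show 2 * (Real.log ((1 + I 0 / ρ) / (1 - I 0 / ρ)) / 2)
        = Real.log ((1 + I 0 / ρ) / (1 - I 0 / ρ)) by ring]
    rw [Real.exp_log (div_pos hd1 hd2)]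
    field_simp
  -- key algebraic relation : a ^ 2 * (ρ + I τ) = ρ - I τ
  have hrt1 : ρ - I τ ≠ 0 := sub_ne_zero.mpr (hIlt τ).ne'
  have hrt2 : ρ + I τ ≠ 0 := by have := hIgt τ; intro h; linarith
  have key : a ^ 2 * (ρ + I τ) = ρ - I τ := by
    have ha2 : a ^ 2 = Real.exp (4 * p₁ * ρ * τ) / Real.exp (2 * artanh (I 0 / ρ)) := by
      rw [hadef, sq, ← Real.exp_add, ← Real.exp_sub]
      congr 1
      rw [hθdef]; ring
    have hVτ := hV τ
    rw [ha2, hexp_artanh]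
    field_simp at hVτ ⊢
    linear_combination hVτ
  -- formula for I
  have hIτ : I τ = -ρ * Real.tanh θ := by
    rw [Real.tanh_eq_sinh_div_cosh, Real.sinh_eq, Real.cosh_eq, Real.exp_neg, ← hadef]
    have h1 : a + a⁻¹ ≠ 0 := by positivity
    field_simp
    linear_combination key
  -- cosh relation
  have hcoshpos : 0 < Real.cosh θ := Real.cosh_pos θ
  have hcosh : Real.cosh θ ^ 2 * (ρ ^ 2 - I τ ^ 2) = ρ ^ 2 := by
    rw [hIτ, Real.tanh_eq_sinh_div_cosh]
    have hcs := Real.cosh_sq_sub_sinh_sq θ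
    field_simp
    linear_combination hcs
  -- formula for E τ
  have hsqrtS0 : 0 < Real.sqrt (D 0 ^ 2 + R 0 ^ 2) := Real.sqrt_pos.mpr hS0
  have hEτ : E τ = ρ / (Real.sqrt (D 0 ^ 2 + R 0 ^ 2) * Real.cosh θ) := by
    have h1 : E τ ^ 2 = (ρ ^ 2 - I τ ^ 2) / (D 0 ^ 2 + R 0 ^ 2) := by
      have hc := hcons τ
      rw [← hρsq] at hc
      rw [hDE τ, hRE τ] at hc
      rw [eq_div_iff hS0.ne']
      linear_combination hc
    have h2 : (ρ / (Real.sqrt (D 0 ^ 2 + R 0 ^ 2) * Real.cosh θ)) ^ 2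
        = (ρ ^ 2 - I τ ^ 2) / (D 0 ^ 2 + R 0 ^ 2) := by
      rw [div_pow, mul_pow, Real.sq_sqrt hS0.le]
      rw [div_eq_div_iff (by positivity) hS0.ne']
      linear_combination -(D 0 ^ 2 + R 0 ^ 2) * hcosh
    have h3 := h1.trans h2.symm
    calc E τ = Real.sqrt (E τ ^ 2) := (Real.sqrt_sq (hEpos τ).le).symm
      _ = Real.sqrt ((ρ / (Real.sqrt (D 0 ^ 2 + R 0 ^ 2) * Real.cosh θ)) ^ 2) := by rw [h3]
      _ = ρ / (Real.sqrt (D 0 ^ 2 + R 0 ^ 2) * Real.cosh θ) := Real.sqrt_sq (by positivity)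
  refine ⟨?_, ?_, hIτ⟩
  · rw [hDE τ, hEτ, div_div]
    ring
  · rw [hRE τ, hEτ, div_div]
    ring
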